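/- arXiv:math/0401439 — 2 statements merged into one kernel-verified Lean document; each statement's English description precedes it below -/
import Mathlib

section
/- If K is a compact polynomially convex subset of ℂ^n, then K × [0,1] (viewing [0,1] ⊂ ℝ ⊂ ℂ) is polynomially convex in ℂ^{n+1}. -/
open Set Function MvPolynomial

def IsPolynomiallyConvex {m : ℕ} (L : Set (Fin m → ℂ)) : Prop :=
  ∀ p ∉ L, ∃ P : MvPolynomial (Fin m) ℂ, ∀ z ∈ L, ‖eval z P‖ < ‖eval p P‖

/-- If `K` is a compact polynomially convex subset of `ℂⁿ`, then
`K × [0,1]` (viewing `[0,1] ⊆ ℝ ⊆ ℂ`) is polynomially convex in `ℂⁿ⁺¹`. -/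
theorem polynomiallyConvex_prod_unitInterval
    {n : ℕ} (K : Set (Fin n → ℂ)) (hK : IsCompact K)
    (hKpc : IsPolynomiallyConvex K) :
    IsPolynomiallyConvex
      {z : Fin (n + 1) → ℂ |
        (fun i : Fin n => z i.castSucc) ∈ K ∧
        z (Fin.last n) ∈ Complex.ofReal '' Set.Icc (0 : ℝ) 1} := by
  intro p hp
  by_cases hp' : (fun i : Fin n => p i.castSucc) ∈ K
  · -- last coordinate outside the segment
    set w := p (Fin.last n) with hwdef
    have hw : w ∉ Complex.ofReal '' Set.Icc (0:ℝ) 1 := fun h => hp ⟨hp', h⟩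
    rcases lt_or_ge 1 w.re with h1 | h1
    · refine ⟨X (Fin.last n), fun z hz => ?_⟩
      obtain ⟨t, ht, htz⟩ := hz.2
      simp only [eval_X, ← htz, ← hwdef]
      rw [Complex.norm_real, Real.norm_eq_abs]
      calc |t| ≤ 1 := abs_le.2 ⟨by linarith [ht.1], ht.2⟩
        _ < w.re := h1
        _ ≤ |w.re| := le_abs_self _
        _ ≤ ‖w‖ := Complex.abs_re_le_norm w
    rcases lt_or_ge w.re 0 with h0 | h0
    · refine ⟨C 1 - X (Fin.last n), fun z hz => ?_⟩
      obtain ⟨t, ht, htz⟩ := hz.2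
      simp only [eval_sub, eval_C, eval_X, ← htz, ← hwdef]
      have e : ((1:ℂ) - t) = ((1 - t : ℝ) : ℂ) := by push_cast; ring
      rw [e, Complex.norm_real, Real.norm_eq_abs]
      have key : 1 - w.re ≤ ‖(1:ℂ) - w‖ := by
        calc 1 - w.re = ((1:ℂ) - w).re := by simp
          _ ≤ |((1:ℂ) - w).re| := le_abs_self _
          _ ≤ ‖(1:ℂ) - w‖ := Complex.abs_re_le_norm _
      calc |1 - t| ≤ 1 := abs_le.2 ⟨by linarith [ht.2], by linarith [ht.1]⟩
        _ < 1 - w.re := by linarith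
        _ ≤ ‖(1:ℂ) - w‖ := key
    · -- Re w ∈ [0,1], so Im w ≠ 0
      have him : w.im ≠ 0 := by
        intro h
        exact hw ⟨w.re, ⟨h0, h1⟩, (Complex.ext (by simp) (by simp [h])).symm⟩
      refine ⟨C 2 - (X (Fin.last n) - C (w.re : ℂ))^2, fun z hz => ?_⟩
      obtain ⟨t, ht, htz⟩ := hz.2
      simp only [eval_sub, eval_C, eval_X, eval_pow, ← htz, ← hwdef]
      have e1 : ((2:ℂ) - ((t:ℂ) - (w.re:ℂ))^2) = ((2 - (t - w.re)^2 : ℝ) : ℂ) := by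
        push_cast; ring
      have e2 : ((2:ℂ) - (w - (w.re:ℂ))^2) = ((2 + w.im^2 : ℝ) : ℂ) := by
        have hwi : w - (w.re:ℂ) = (w.im : ℂ) * Complex.I := by
          apply Complex.ext <;> simp
        rw [hwi, mul_pow, Complex.I_sq]
        push_cast; ring
      rw [e1, e2, Complex.norm_real, Complex.norm_real, Real.norm_eq_abs,
        Real.norm_eq_abs]
      have hsq : (t - w.re)^2 ≤ 1 := by
        have habs : |t - w.re| ≤ 1 :=
          abs_le.2 ⟨by linarith [ht.1, h1], by linarith [ht.2, h0]⟩
        calc (t - w.re)^2 = |t - w.re|^2 := (sq_abs _).symm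
          _ ≤ 1 := by nlinarith [abs_nonneg (t - w.re)]
      have hsq0 : 0 ≤ (t - w.re)^2 := sq_nonneg _
      have himsq : 0 < w.im^2 := by positivity
      rw [abs_of_nonneg (by linarith), abs_of_nonneg (by linarith)]
      linarith
  · obtain ⟨P, hP⟩ := hKpc _ hp'
    refine ⟨rename Fin.castSucc P, fun z hz => ?_⟩
    rw [eval_rename, eval_rename]
    exact hP _ hz.1
end

section
/- Let E₁ → Z and E₂ → Z be holomorphic vector bundles and s₁ : E₁ → Z, s₂ : E₂ → Z sprays on a complex manifold Z (i.e., s_j(0_z) = z for all z). Form the composed bundle E^{(2)} = s₁*(E₂) → E₁ with composed spray s^{(2)}(e₁, e₂) = s₂(e₂). Then the restriction of the differential of s^{(2)} at the zero section over z ∈ Z to the subspace E_{1,z} ⊕ E_{2,z} of T_{0_z}E^{(2)} equals (ds₁)_{0_z} ⊕ (ds₂)_{0_z}; in particular, if (ds₁)_{0_z}(E_{1,z}) + (ds₂)_{0_z}(E_{2,z}) = T_z Z for every z, then the composed spray s^{(2)} is dominating. -/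
open scoped Topology


open scoped Manifold
open Set Function Bundle


theorem hasMFDerivAt_zeroSection
    {𝕜 : Type*} [NontriviallyNormedField 𝕜]
    {EB : Type*} [NormedAddCommGroup EB] [NormedSpace 𝕜 EB]
    {HB : Type*} [TopologicalSpace HB] {IB : ModelWithCorners 𝕜 EB HB}
    {B : Type*} [TopologicalSpace B] [ChartedSpace HB B]
    {F : Type*} [NormedAddCommGroup F] [NormedSpace 𝕜 F]
    (E : B → Type*) [TopologicalSpace (TotalSpace F E)]
    [∀ x, TopologicalSpace (E x)] [∀ x, AddCommGroup (E x)] [∀ x, Module 𝕜 (E x)]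
    [FiberBundle F E] [VectorBundle 𝕜 F E] [ContMDiffVectorBundle (⊤ : ℕ∞) F E IB]
    (z : B) :
    HasMFDerivAt IB (IB.prod 𝓘(𝕜, F)) (zeroSection F E) z
      (ContinuousLinearMap.inl 𝕜 EB F) := by
  have hc : ContMDiff IB (IB.prod 𝓘(𝕜, F)) (⊤ : ℕ∞) (zeroSection F E) := contMDiff_zeroSection 𝕜 E
  refine ⟨hc.continuous.continuousAt, ?_⟩
  have h1 : (extChartAt IB z).target ∈ 𝓝[range IB] (extChartAt IB z z) :=
    extChartAt_target_mem_nhdsWithin z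
  have h2 : (extChartAt IB z).symm ⁻¹' (trivializationAt F E z).baseSet
      ∈ 𝓝[range IB] (extChartAt IB z z) :=
    mem_nhdsWithin_of_mem_nhds <| extChartAt_preimage_mem_nhds <|
      (trivializationAt F E z).open_baseSet.mem_nhds (mem_baseSet_trivializationAt F E z)
  have key : ∀ x ∈ (extChartAt IB z).target ∩
      (extChartAt IB z).symm ⁻¹' (trivializationAt F E z).baseSet,
      writtenInExtChartAt IB (IB.prod 𝓘(𝕜, F)) z (zeroSection F E) x = (x, 0) := by
    rintro x ⟨hx, hb⟩
    have : (trivializationAt F E z) (zeroSection F E ((extChartAt IB z).symm x))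
        = (((extChartAt IB z).symm x), 0) := (trivializationAt F E z).zeroSection 𝕜 hb
    simp only [writtenInExtChartAt, Function.comp_apply, extChartAt, OpenPartialHomeomorph.extend,
      FiberBundle.chartedSpace_chartAt, zeroSection_proj, PartialEquiv.coe_trans,
      ModelWithCorners.toPartialEquiv_coe, OpenPartialHomeomorph.coe_coe,
      OpenPartialHomeomorph.trans_apply, OpenPartialHomeomorph.prod_apply,
      OpenPartialHomeomorph.refl_apply, ModelWithCorners.prod_apply,
      ModelWithCorners.toPartialEquiv_coe]
    have hsy : (↑((chartAt HB z).toPartialEquiv ≫ IB.toPartialEquiv).symm : EB → B)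
        = ↑(extChartAt IB z).symm := rfl
    simp only [Trivialization.coe_coe] at this ⊢
    rw [hsy, this]
    simp only [OpenPartialHomeomorph.prod_apply, OpenPartialHomeomorph.refl_apply, id_eq,
      modelWithCornersSelf_coe]
    exact Prod.ext ((extChartAt IB z).right_inv hx) rfl
  have hev : writtenInExtChartAt IB (IB.prod 𝓘(𝕜, F)) z (zeroSection F E)
      =ᶠ[𝓝[range IB] ((extChartAt IB z) z)] fun x => (x, (0 : F)) := by
    filter_upwards [h1, h2] with x hx hb using key x ⟨hx, hb⟩
  have hmem : (extChartAt IB z) z ∈ (extChartAt IB z).target ∩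
      (extChartAt IB z).symm ⁻¹' (trivializationAt F E z).baseSet := by
    refine ⟨(extChartAt IB z).map_source (mem_extChartAt_source z), ?_⟩
    rw [mem_preimage, (extChartAt IB z).left_inv (mem_extChartAt_source z)]
    exact mem_baseSet_trivializationAt F E z
  have hder : HasFDerivWithinAt (fun x : EB => (x, (0 : F)))
      (ContinuousLinearMap.inl 𝕜 EB F) (range IB) ((extChartAt IB z) z) := by
    exact (ContinuousLinearMap.inl 𝕜 EB F).hasFDerivAt.hasFDerivWithinAt
  exact hder.congr_of_eventuallyEq hev (key _ hmem)

theorem hasMFDerivAt_pullback_lift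
    {𝕜 : Type*} [NontriviallyNormedField 𝕜]
    {EB : Type*} [NormedAddCommGroup EB] [NormedSpace 𝕜 EB]
    {HB : Type*} [TopologicalSpace HB] {IB : ModelWithCorners 𝕜 EB HB}
    {B : Type*} [TopologicalSpace B] [ChartedSpace HB B]
    {EB' : Type*} [NormedAddCommGroup EB'] [NormedSpace 𝕜 EB']
    {HB' : Type*} [TopologicalSpace HB'] {IB' : ModelWithCorners 𝕜 EB' HB'}
    {B' : Type*} [TopologicalSpace B'] [ChartedSpace HB' B']
    {F : Type*} [NormedAddCommGroup F] [NormedSpace 𝕜 F]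
    (E : B → Type*) [TopologicalSpace (TotalSpace F E)]
    [∀ x, TopologicalSpace (E x)] [∀ x, Zero (E x)] [FiberBundle F E]
    (f : C(B', B)) {b'₀ : B'} {d : EB' →L[𝕜] EB}
    (hd : HasMFDerivAt IB' IB (⇑f) b'₀ d) (v₀ : (⇑f *ᵖ E) b'₀) :
    HasMFDerivAt (IB'.prod 𝓘(𝕜, F)) (IB.prod 𝓘(𝕜, F)) (Pullback.lift ⇑f)
      (⟨b'₀, v₀⟩ : TotalSpace F (⇑f *ᵖ E))
      (d.prodMap (ContinuousLinearMap.id 𝕜 F)) := by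
  refine ⟨(Pullback.continuous_lift F E ⇑f).continuousAt, ?_⟩
  set T := trivializationAt F E (f b'₀) with hT
  set p₀ : TotalSpace F (⇑f *ᵖ E) := ⟨b'₀, v₀⟩ with hp₀
  have hS : (extChartAt IB' b'₀).symm ⁻¹' (⇑f ⁻¹' T.baseSet)
      ∈ 𝓝[range IB'] ((extChartAt IB' b'₀) b'₀) :=
    mem_nhdsWithin_of_mem_nhds <| extChartAt_preimage_mem_nhds <|
      (f.continuous.continuousAt) <| T.open_baseSet.mem_nhds
        (mem_baseSet_trivializationAt F E (f b'₀))
  have key : ∀ p : EB' × F, (extChartAt IB' b'₀).symm p.1 ∈ ⇑f ⁻¹' T.baseSet →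
      writtenInExtChartAt (IB'.prod 𝓘(𝕜, F)) (IB.prod 𝓘(𝕜, F)) p₀ (Pullback.lift ⇑f) p
        = (writtenInExtChartAt IB' IB b'₀ (⇑f) p.1, p.2) := by
    rintro ⟨x, y⟩ hb
    have h1 : (Pullback.lift ⇑f)
        ((extChartAt (IB'.prod 𝓘(𝕜, F)) p₀).symm (x, y))
        = ⟨f ((extChartAt IB' b'₀).symm x), T.symm (f ((extChartAt IB' b'₀).symm x)) y⟩ := rfl
    have h2 : T (⟨f ((extChartAt IB' b'₀).symm x),
          T.symm (f ((extChartAt IB' b'₀).symm x)) y⟩ : TotalSpace F E)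
        = (f ((extChartAt IB' b'₀).symm x), y) := T.apply_mk_symm hb y
    show (extChartAt (IB.prod 𝓘(𝕜, F)) (Pullback.lift ⇑f p₀))
        ((Pullback.lift ⇑f) ((extChartAt (IB'.prod 𝓘(𝕜, F)) p₀).symm (x, y))) = _
    rw [h1]
    simp only [extChartAt, OpenPartialHomeomorph.extend, FiberBundle.chartedSpace_chartAt,
      Pullback.lift_proj, PartialEquiv.coe_trans, ModelWithCorners.toPartialEquiv_coe,
      OpenPartialHomeomorph.coe_coe, OpenPartialHomeomorph.trans_apply, OpenPartialHomeomorph.prod_apply,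
      OpenPartialHomeomorph.refl_apply, ModelWithCorners.prod_apply, Trivialization.coe_coe,
      modelWithCornersSelf_coe, id_eq, Function.comp_apply]
    have hsy : (↑((chartAt HB' b'₀).toPartialEquiv ≫ IB'.toPartialEquiv).symm : EB' → B')
        = ↑(extChartAt IB' b'₀).symm := rfl
    rw [hsy, ← hT, h2]
    rfl
  have hrange : (range ↑(IB'.prod 𝓘(𝕜, F)) : Set (EB' × F)) = range IB' ×ˢ (univ : Set F) := by
    rw [ModelWithCorners.range_prod]; simp
  rw [hrange]
  set pt := (extChartAt (IB'.prod 𝓘(𝕜, F)) p₀) p₀ with hpt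
  have hS1 : ((extChartAt IB' b'₀).symm ⁻¹' (⇑f ⁻¹' T.baseSet)) ∈ 𝓝[range IB'] pt.1 := hS
  have hmem : (((extChartAt IB' b'₀).symm ⁻¹' (⇑f ⁻¹' T.baseSet)) ×ˢ (univ : Set F))
      ∈ 𝓝[range IB' ×ˢ (univ : Set F)] pt := by
    rw [show pt = (pt.1, pt.2) from rfl, nhdsWithin_prod_eq]
    exact Filter.prod_mem_prod hS1 self_mem_nhdsWithin
  have hev : writtenInExtChartAt (IB'.prod 𝓘(𝕜, F)) (IB.prod 𝓘(𝕜, F)) p₀ (Pullback.lift ⇑f)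
      =ᶠ[𝓝[range IB' ×ˢ (univ : Set F)] pt]
      fun p => (writtenInExtChartAt IB' IB b'₀ (⇑f) p.1, p.2) := by
    filter_upwards [hmem] with p hp using key p hp.1
  have hb0 : (extChartAt IB' b'₀).symm pt.1 ∈ ⇑f ⁻¹' T.baseSet := by
    have : (extChartAt IB' b'₀).symm pt.1 = b'₀ :=
      (extChartAt IB' b'₀).left_inv (mem_extChartAt_source b'₀)
    rw [this]
    exact mem_baseSet_trivializationAt F E (f b'₀)
  have hfst : HasFDerivWithinAt (Prod.fst : EB' × F → EB')
      (ContinuousLinearMap.fst 𝕜 EB' F) (range IB' ×ˢ (univ : Set F)) pt :=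
    hasFDerivAt_fst.hasFDerivWithinAt
  have hsnd : HasFDerivWithinAt (Prod.snd : EB' × F → F)
      (ContinuousLinearMap.snd 𝕜 EB' F) (range IB' ×ˢ (univ : Set F)) pt :=
    hasFDerivAt_snd.hasFDerivWithinAt
  have h1 : HasFDerivWithinAt (writtenInExtChartAt IB' IB b'₀ (⇑f)) d (range IB')
      (Prod.fst pt) := hd.2
  have hcomp := HasFDerivWithinAt.comp pt h1 hfst (fun p hp => hp.1)
  have hder := hcomp.prodMk hsnd
  have hEq : d.prodMap (ContinuousLinearMap.id 𝕜 F)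
      = (d.comp (ContinuousLinearMap.fst 𝕜 EB' F)).prod (ContinuousLinearMap.snd 𝕜 EB' F) := by
    ext p <;> simp
  rw [hEq]
  exact hder.congr_of_eventuallyEq hev (key pt hb0)


/-- Let `E₁ → Z`, `E₂ → Z` be holomorphic vector bundles and
`s₁ : E₁ → Z`, `s₂ : E₂ → Z` sprays on `Z` (so `s_j(0_z) = z`).  Form the composed
bundle `E⁽²⁾ = s₁*(E₂) → E₁` and the composed spray `s⁽²⁾(e₁,e₂) = s₂(e₂)`.  Then the
restriction of the differential of `s⁽²⁾` at the zero point `0_z` of `E⁽²⁾` over `z` to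
the vertical subspace `E_{1,z} ⊕ E_{2,z} ⊆ T_{0_z}E⁽²⁾` equals `(ds₁)_{0_z} ⊕ (ds₂)_{0_z}`;
in particular, if `(ds₁)_{0_z}(E_{1,z}) + (ds₂)_{0_z}(E_{2,z}) = T_z Z` for every `z`,
then the composed spray `s⁽²⁾` is dominating. -/
theorem composed_spray_differential_and_domination
    {EZ : Type*} [NormedAddCommGroup EZ] [NormedSpace ℂ EZ]
    {Z : Type*} [TopologicalSpace Z] [ChartedSpace EZ Z] [IsManifold 𝓘(ℂ, EZ) (⊤ : WithTop ℕ∞) Z]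
    {F₁ : Type*} [NormedAddCommGroup F₁] [NormedSpace ℂ F₁]
    {F₂ : Type*} [NormedAddCommGroup F₂] [NormedSpace ℂ F₂]
    (E₁ : Z → Type*) [TopologicalSpace (TotalSpace F₁ E₁)]
    [∀ z, TopologicalSpace (E₁ z)] [∀ z, AddCommGroup (E₁ z)] [∀ z, Module ℂ (E₁ z)]
    [FiberBundle F₁ E₁] [VectorBundle ℂ F₁ E₁] [ContMDiffVectorBundle (⊤ : ℕ∞) F₁ E₁ 𝓘(ℂ, EZ)]
    (E₂ : Z → Type*) [TopologicalSpace (TotalSpace F₂ E₂)]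
    [∀ z, TopologicalSpace (E₂ z)] [∀ z, AddCommGroup (E₂ z)] [∀ z, Module ℂ (E₂ z)]
    [FiberBundle F₂ E₂] [VectorBundle ℂ F₂ E₂] [ContMDiffVectorBundle (⊤ : ℕ∞) F₂ E₂ 𝓘(ℂ, EZ)]
    (s₁ : TotalSpace F₁ E₁ → Z)
    (hs₁ : MDifferentiable (𝓘(ℂ, EZ).prod 𝓘(ℂ, F₁)) 𝓘(ℂ, EZ) s₁)
    (hs₁0 : ∀ z : Z, s₁ ⟨z, (0 : E₁ z)⟩ = z)
    (s₂ : TotalSpace F₂ E₂ → Z)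
    (hs₂ : MDifferentiable (𝓘(ℂ, EZ).prod 𝓘(ℂ, F₂)) 𝓘(ℂ, EZ) s₂)
    (hs₂0 : ∀ z : Z, s₂ ⟨z, (0 : E₂ z)⟩ = z)
    -- `f` is the spray map `s₁`, bundled as a continuous map so that the pull-back
    -- bundle `E⁽²⁾ = s₁*(E₂) → E₁` carries its natural topology and charts
    (f : C(TotalSpace F₁ E₁, Z)) (hf : ⇑f = s₁)
    -- the composed spray `s⁽²⁾ : E⁽²⁾ → Z`, `s⁽²⁾(e₁, e₂) = s₂ e₂`
    (s' : TotalSpace F₂ (⇑f *ᵖ E₂) → Z)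
    (hs' : s' = fun q => s₂ (Bundle.Pullback.lift ⇑f q)) :
    (∀ (z : Z) (w₁ : F₁) (w₂ : F₂),
      @id EZ (mfderiv ((𝓘(ℂ, EZ).prod 𝓘(ℂ, F₁)).prod 𝓘(ℂ, F₂)) 𝓘(ℂ, EZ) s'
          ⟨⟨z, (0 : E₁ z)⟩, (0 : E₂ (f ⟨z, (0 : E₁ z)⟩))⟩
          (((0 : EZ), w₁), w₂))
        = @id EZ (mfderiv (𝓘(ℂ, EZ).prod 𝓘(ℂ, F₁)) 𝓘(ℂ, EZ) s₁ ⟨z, (0 : E₁ z)⟩ ((0 : EZ), w₁))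
          + @id EZ (mfderiv (𝓘(ℂ, EZ).prod 𝓘(ℂ, F₂)) 𝓘(ℂ, EZ) s₂ ⟨z, (0 : E₂ z)⟩
              ((0 : EZ), w₂))) ∧
    ((∀ (z : Z) (u : EZ), ∃ (w₁ : F₁) (w₂ : F₂),
        @id EZ (mfderiv (𝓘(ℂ, EZ).prod 𝓘(ℂ, F₁)) 𝓘(ℂ, EZ) s₁ ⟨z, (0 : E₁ z)⟩ ((0 : EZ), w₁))
          + @id EZ (mfderiv (𝓘(ℂ, EZ).prod 𝓘(ℂ, F₂)) 𝓘(ℂ, EZ) s₂ ⟨z, (0 : E₂ z)⟩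
              ((0 : EZ), w₂)) = u) →
      ∀ (z : Z) (u : EZ), ∃ (w₁ : F₁) (w₂ : F₂),
        @id EZ (mfderiv ((𝓘(ℂ, EZ).prod 𝓘(ℂ, F₁)).prod 𝓘(ℂ, F₂)) 𝓘(ℂ, EZ) s'
          ⟨⟨z, (0 : E₁ z)⟩, (0 : E₂ (f ⟨z, (0 : E₁ z)⟩))⟩
          (((0 : EZ), w₁), w₂)) = u) := by
  
  have main : ∀ (z : Z) (w₁ : F₁) (w₂ : F₂),
      @id EZ (mfderiv ((𝓘(ℂ, EZ).prod 𝓘(ℂ, F₁)).prod 𝓘(ℂ, F₂)) 𝓘(ℂ, EZ) s'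
          ⟨⟨z, (0 : E₁ z)⟩, (0 : E₂ (f ⟨z, (0 : E₁ z)⟩))⟩
          (((0 : EZ), w₁), w₂))
        = @id EZ (mfderiv (𝓘(ℂ, EZ).prod 𝓘(ℂ, F₁)) 𝓘(ℂ, EZ) s₁ ⟨z, (0 : E₁ z)⟩ ((0 : EZ), w₁))
          + @id EZ (mfderiv (𝓘(ℂ, EZ).prod 𝓘(ℂ, F₂)) 𝓘(ℂ, EZ) s₂ ⟨z, (0 : E₂ z)⟩
              ((0 : EZ), w₂)) := by
    intro z w₁ w₂
    set e₀ : TotalSpace F₁ E₁ := ⟨z, (0 : E₁ z)⟩ with he₀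
    set p₀ : TotalSpace F₂ (⇑f *ᵖ E₂) := ⟨e₀, (0 : E₂ (f e₀))⟩ with hp₀
    have hfz : f e₀ = z := by rw [show (f e₀ : Z) = s₁ e₀ from congrFun hf e₀, hs₁0]
    set D₁ := mfderiv (𝓘(ℂ, EZ).prod 𝓘(ℂ, F₁)) 𝓘(ℂ, EZ) s₁ e₀ with hD₁
    set D₂ := mfderiv (𝓘(ℂ, EZ).prod 𝓘(ℂ, F₂)) 𝓘(ℂ, EZ) s₂ ⟨z, (0 : E₂ z)⟩ with hD₂
    have hd1 : HasMFDerivAt (𝓘(ℂ, EZ).prod 𝓘(ℂ, F₁)) 𝓘(ℂ, EZ) (⇑f) e₀ D₁ := by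
      rw [hf]
      exact (hs₁ e₀).hasMFDerivAt
    have hlift := hasMFDerivAt_pullback_lift (F := F₂) E₂ f hd1 (0 : E₂ (f e₀))
    have hd2 : HasMFDerivAt (𝓘(ℂ, EZ).prod 𝓘(ℂ, F₂)) 𝓘(ℂ, EZ) s₂ ⟨z, (0 : E₂ z)⟩ D₂ :=
      (hs₂ ⟨z, (0 : E₂ z)⟩).hasMFDerivAt
    have hzpt : Pullback.lift ⇑f p₀ = (⟨z, (0 : E₂ z)⟩ : TotalSpace F₂ E₂) :=
      congrArg (zeroSection F₂ E₂) hfz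
    have hd2' : HasMFDerivAt (𝓘(ℂ, EZ).prod 𝓘(ℂ, F₂)) 𝓘(ℂ, EZ) s₂ (Pullback.lift ⇑f p₀) D₂ :=
      hzpt.symm ▸ hd2
    have hcomp := hd2'.comp p₀ hlift
    have hs'eq : s' = s₂ ∘ Pullback.lift ⇑f := hs'
    have hS' : HasMFDerivAt ((𝓘(ℂ, EZ).prod 𝓘(ℂ, F₁)).prod 𝓘(ℂ, F₂)) 𝓘(ℂ, EZ) s' p₀
        (D₂.comp (D₁.prodMap (ContinuousLinearMap.id ℂ F₂))) := hs'eq.symm ▸ hcomp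
    have hmf := hS'.mfderiv
    -- zero-section identity: D₂ (v, 0) = v
    have hzs := hasMFDerivAt_zeroSection (F := F₂) (IB := 𝓘(ℂ, EZ)) E₂ z
    have hid : HasMFDerivAt 𝓘(ℂ, EZ) 𝓘(ℂ, EZ) (s₂ ∘ zeroSection F₂ E₂) z
        (D₂.comp (ContinuousLinearMap.inl ℂ EZ F₂)) := hd2.comp z hzs
    have hsid : (s₂ ∘ zeroSection F₂ E₂) = id := funext fun w => hs₂0 w
    rw [hsid] at hid
    have huniq := hasMFDerivAt_unique hid (hasMFDerivAt_id (I := 𝓘(ℂ, EZ)) z)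
    have hD2v : ∀ v : EZ, D₂ (v, 0) = v := fun v => by
      have := ContinuousLinearMap.ext_iff.1 huniq v
      exact this
    rw [hmf]
    have hsplit : ((@id EZ (D₁ ((0 : EZ), w₁)), w₂) : EZ × F₂)
        = ((@id EZ (D₁ ((0 : EZ), w₁)), (0 : F₂)) : EZ × F₂) + (((0 : EZ), w₂) : EZ × F₂) := by
      simp
    calc @id EZ ((D₂.comp (D₁.prodMap (ContinuousLinearMap.id ℂ F₂))) (((0 : EZ), w₁), w₂))
        = @id EZ (D₂ (((@id EZ (D₁ ((0 : EZ), w₁)), w₂) : EZ × F₂))) := rfl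
      _ = @id EZ (D₂ (((@id EZ (D₁ ((0 : EZ), w₁)), (0 : F₂)) : EZ × F₂)
            + (((0 : EZ), w₂) : EZ × F₂))) := by rw [hsplit]
      _ = @id EZ (D₂ (((@id EZ (D₁ ((0 : EZ), w₁)), (0 : F₂)) : EZ × F₂)))
            + @id EZ (D₂ ((((0 : EZ), w₂)) : EZ × F₂)) := by exact D₂.map_add _ _
      _ = @id EZ (D₁ ((0 : EZ), w₁)) + @id EZ (D₂ ((((0 : EZ), w₂)) : EZ × F₂)) := by
            rw [hD2v]; rfl
  refine ⟨main, fun hyp z u => ?_⟩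
  obtain ⟨w₁, w₂, hw⟩ := hyp z u
  exact ⟨w₁, w₂, by rw [main z w₁ w₂]; exact hw⟩
end
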